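/- Let (u₀,v₀) be a standard pair and F₁, F₂ cdf's. If x₀ is an up-crossing point for the pair (F₁,F₂), i.e., F₁(x₀⁻) ≤ F₂(x₀⁻) ≤ F₂(x₀) ≤ F₁(x₀), with F₁(x) < F₂(x) for x slightly below the crossing interval and F₁(x) > F₂(x) for x slightly above it, then ∫_{-∞}^{x₀} v₀(F₁(x)) du₀(x) ≥ ∫_{-∞}^{x₀} v₀(F₂(x)) du₀(x) implies ∫_{0}^{p} u₀(F₁⁻¹(α)) dv₀(α) ≤ ∫_{0}^{p} u₀(F₂⁻¹(α)) dv₀(α) for all p ∈ [F₂(x₀⁻), F₂(x₀)]. Conversely, if α₀ is an up-crossing value of (F₁⁻¹, F₂⁻¹), then ∫_{0}^{α₀} u₀(F₁⁻¹(α)) dv₀(α) ≤ ∫_{0}^{α₀} u₀(F₂⁻¹(α)) dv₀(α) implies ∫_{-∞}^{c} v₀(F₁(x)) du₀(x) ≥ ∫_{-∞}^{c} v₀(F₂(x)) du₀(x) for all c ∈ [F₂⁻¹(α₀), F₂⁻¹(α₀⁺)]. -/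

import Mathlib

open MeasureTheory Set Filter Topology Function

noncomputable section

/-- A cumulative distribution function: non-decreasing, right-continuous,
with limit 0 at -∞ and limit 1 at +∞. -/
structure IsCDF (F : ℝ → ℝ) : Prop where
  mono : Monotone F
  right_cont : ∀ x, ContinuousWithinAt F (Ici x) x
  tendsto_atBot : Tendsto F atBot (𝓝 0)
  tendsto_atTop : Tendsto F atTop (𝓝 1)

/-- The quantile function `F⁻¹ (α) = inf {x | F x ≥ α}`. -/
def qf (F : ℝ → ℝ) (α : ℝ) : ℝ := sInf {x | α ≤ F x}

/-- `(u₀, v₀)` is a standard pair: `u₀ : ℝ → ℝ` non-decreasing left-continuous,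
`v₀ : [0,1] → [0,1]` non-decreasing right-continuous with `v₀ 0 = 0` and `v₀ (1⁻) = 1`. -/
structure StandardPair (u₀ v₀ : ℝ → ℝ) : Prop where
  u_mono : Monotone u₀
  u_left_cont : ∀ x, ContinuousWithinAt u₀ (Iic x) x
  v_mono : MonotoneOn v₀ (Icc 0 1)
  v_right_cont : ∀ α ∈ Ico (0:ℝ) 1, Tendsto v₀ (𝓝[>] α) (𝓝 (v₀ α))
  v_mem : ∀ α ∈ Icc (0:ℝ) 1, v₀ α ∈ Icc (0:ℝ) 1
  v_zero : v₀ 0 = 0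
  v_one : Tendsto v₀ (𝓝[<] (1:ℝ)) (𝓝 1)

/-- `μ` is the Lebesgue–Stieltjes measure of the left-continuous integrator `g` on `ℝ`:
`μ [a,b) = g b - g a`. -/
def IsLSL (g : ℝ → ℝ) (μ : Measure ℝ) : Prop :=
  ∀ a b : ℝ, a ≤ b → μ (Ico a b) = ENNReal.ofReal (g b - g a)

/-- `μ` is the Lebesgue–Stieltjes measure of the right-continuous integrator `g` on `ℝ`:
`μ (a,b] = g b - g a`. -/
def IsLSR (g : ℝ → ℝ) (μ : Measure ℝ) : Prop :=
  ∀ a b : ℝ, a ≤ b → μ (Ioc a b) = ENNReal.ofReal (g b - g a)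

/-- `μ` behaves on `[0,1]` as the Lebesgue–Stieltjes measure of the right-continuous
integrator `g`: `μ (a,b] = g b - g a` for `0 ≤ a ≤ b ≤ 1`. -/
def IsLSR01 (g : ℝ → ℝ) (μ : Measure ℝ) : Prop :=
  ∀ a b : ℝ, 0 ≤ a → a ≤ b → b ≤ 1 → μ (Ioc a b) = ENNReal.ofReal (g b - g a)

/-- `μ` behaves inside `(0,1)` as the Lebesgue–Stieltjes measure of the left-continuous
integrator `g`: `μ [a,b) = g b - g a` for `0 < a ≤ b < 1`. -/
def IsLSL01 (g : ℝ → ℝ) (μ : Measure ℝ) : Prop :=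
  ∀ a b : ℝ, 0 < a → a ≤ b → b < 1 → μ (Ico a b) = ENNReal.ofReal (g b - g a)

/-- `u` has density `k` with respect to the Stieltjes measure `μ₀` of `u₀`
(left-continuous convention `[a,b)`), i.e. `du = k du₀`:
`u b - u a = ∫_{[a,b)} k dμ₀` for all `a ≤ b`. -/
def HasDensity (u k : ℝ → ℝ) (μ₀ : Measure ℝ) : Prop :=
  ∀ a b : ℝ, a ≤ b → u b - u a = ∫ s in Ico a b, k s ∂μ₀

/-- The upper `(u₀,v₀)`-ordering `F₁ ≺^{(u₀,v₀)} F₂`: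
`∫ v₀(F₁) du ≥ ∫ v₀(F₂) du` for every non-decreasing `u₀`-concave `u`, where such a `u`
is encoded through its Radon–Nikodym density `k = du/du₀` (bounded, non-negative,
non-increasing), so that `du = k dμ₀`.  Here `μ₀` is the Stieltjes measure of `u₀`. -/
def UpperOrder (v₀ F₁ F₂ : ℝ → ℝ) (μ₀ : Measure ℝ) : Prop :=
  ∀ k : ℝ → ℝ, Antitone k → (∀ x, 0 ≤ k x) → (∃ C, ∀ x, k x ≤ C) →
    ∫⁻ x, ENNReal.ofReal (v₀ (F₂ x)) ∂(μ₀.withDensity fun x => ENNReal.ofReal (k x)) ≤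
      ∫⁻ x, ENNReal.ofReal (v₀ (F₁ x)) ∂(μ₀.withDensity fun x => ENNReal.ofReal (k x))

/-- The lower `(u₀,v₀)`-ordering `F₁ ≺_{(u₀,v₀)} F₂`:
`-∫ (1 - v₀(F₁)) du ≥ -∫ (1 - v₀(F₂)) du` for every non-decreasing `u₀`-convex `u`,
encoded through its density `m = du/du₀` (non-negative, non-decreasing). -/
def LowerOrder (v₀ F₁ F₂ : ℝ → ℝ) (μ₀ : Measure ℝ) : Prop :=
  ∀ m : ℝ → ℝ, Monotone m → (∀ x, 0 ≤ m x) →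
    ∫⁻ x, ENNReal.ofReal (1 - v₀ (F₁ x)) ∂(μ₀.withDensity fun x => ENNReal.ofReal (m x)) ≤
      ∫⁻ x, ENNReal.ofReal (1 - v₀ (F₂ x)) ∂(μ₀.withDensity fun x => ENNReal.ofReal (m x))

/-- Condition (a): `∫_ℝ |u₀(x)| dv₀(F(x)) < ∞`, where `ν` is the Stieltjes measure
of `v₀ ∘ F`. -/
def CondA (u₀ : ℝ → ℝ) (ν : Measure ℝ) : Prop :=
  ∫⁻ x, ENNReal.ofReal |u₀ x| ∂ν < ⊤

/-- Condition (b): `∫_{[0,p)} v₀(α) du₀(F⁻¹(α)) < ∞` for all `p < 1`, where `lam` is the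
Stieltjes measure of `u₀ ∘ F⁻¹` on `(0,1)`. -/
def CondB (v₀ : ℝ → ℝ) (lam : Measure ℝ) : Prop :=
  ∀ p : ℝ, p < 1 → ∫⁻ α in Ioo 0 p, ENNReal.ofReal (v₀ α) ∂lam < ⊤

/-- Condition (b)': `∫_ℝ (1 - v₀(F(x))) du₀(x) < ∞`, where `μ₀` is the Stieltjes
measure of `u₀`. -/
def CondB' (v₀ F : ℝ → ℝ) (μ₀ : Measure ℝ) : Prop :=
  ∫⁻ x, ENNReal.ofReal (1 - v₀ (F x)) ∂μ₀ < ⊤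




-- Auxiliary lemmas
lemma cdf_nonneg {F : ℝ → ℝ} (hF : IsCDF F) (x : ℝ) : 0 ≤ F x := by
  refine le_of_tendsto hF.tendsto_atBot ?_
  filter_upwards [eventually_le_atBot x] with y hy using hF.mono hy

lemma cdf_le_one {F : ℝ → ℝ} (hF : IsCDF F) (x : ℝ) : F x ≤ 1 := by
  refine ge_of_tendsto hF.tendsto_atTop ?_
  filter_upwards [eventually_ge_atTop x] with y hy using hF.mono hy

lemma cdf_set_nonempty {F : ℝ → ℝ} (hF : IsCDF F) {α : ℝ} (hα : α < 1) :
    {x | α ≤ F x}.Nonempty := by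
  have := hF.tendsto_atTop.eventually_const_le hα
  rcases this.exists with ⟨x, hx⟩
  exact ⟨x, hx⟩

lemma cdf_set_bddBelow {F : ℝ → ℝ} (hF : IsCDF F) {α : ℝ} (hα : 0 < α) :
    BddBelow {x | α ≤ F x} := by
  have := hF.tendsto_atBot.eventually_lt_const hα
  rcases (eventually_atBot.1 this) with ⟨N, hN⟩
  refine ⟨N, fun y hy => ?_⟩
  by_contra h
  push_neg at h
  exact absurd hy (not_le.2 (hN y h.le))

lemma cdf_qf_le {F : ℝ → ℝ} (hF : IsCDF F) {α x : ℝ} (hα : 0 < α) (h : α ≤ F x) :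
    qf F α ≤ x := csInf_le (cdf_set_bddBelow hF hα) h

lemma cdf_le_qf {F : ℝ → ℝ} (hF : IsCDF F) {α : ℝ} (hα : 0 < α) (hα1 : α < 1) :
    α ≤ F (qf F α) := by
  have hne := cdf_set_nonempty hF hα1
  have hbdd := cdf_set_bddBelow hF hα
  have key : ∀ y, qf F α < y → α ≤ F y := by
    intro y hy
    rcases (csInf_lt_iff hbdd hne).1 hy with ⟨z, hz, hzy⟩
    exact le_trans hz (hF.mono hzy.le)
  have h1 : Tendsto F (𝓝[>] (qf F α)) (𝓝 (F (qf F α))) :=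
    (hF.right_cont (qf F α)).mono_left (nhdsWithin_mono _ Ioi_subset_Ici_self)
  refine ge_of_tendsto h1 ?_
  filter_upwards [self_mem_nhdsWithin] with y hy using key y hy

lemma cdf_qf_le_iff {F : ℝ → ℝ} (hF : IsCDF F) {α x : ℝ} (hα : 0 < α) (hα1 : α < 1) :
    qf F α ≤ x ↔ α ≤ F x :=
  ⟨fun h => le_trans (cdf_le_qf hF hα hα1) (hF.mono h), cdf_qf_le hF hα⟩

lemma cdf_lt_qf_iff {F : ℝ → ℝ} (hF : IsCDF F) {α x : ℝ} (hα : 0 < α) (hα1 : α < 1) :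
    x < qf F α ↔ F x < α := by
  rw [← not_le, ← not_le, cdf_qf_le_iff hF hα hα1]

lemma cdf_qf_mono {F : ℝ → ℝ} (hF : IsCDF F) {α β : ℝ} (hα : 0 < α) (hβ : β < 1)
    (hαβ : α ≤ β) : qf F α ≤ qf F β :=
  csInf_le_csInf (cdf_set_bddBelow hF hα) (cdf_set_nonempty hF hβ)
    (fun x hx => le_trans hαβ hx)

lemma sigmaFinite_of_isLSL {g : ℝ → ℝ} {μ : Measure ℝ} (h : IsLSL g μ) :
    SigmaFinite μ := by
  refine ⟨⟨⟨fun n => Ico (-(n:ℝ)) n, fun _ => trivial, fun n => ?_, ?_⟩⟩⟩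
  · have hn : -(n:ℝ) ≤ n := by simpa using neg_nonpos.2 (Nat.cast_nonneg n) |>.trans (Nat.cast_nonneg n)
    simp only [h _ _ hn]; exact ENNReal.ofReal_lt_top
  · refine iUnion_eq_univ_iff.2 fun x => ?_
    rcases exists_nat_gt |x| with ⟨n, hn⟩
    have := abs_lt.1 hn
    exact ⟨n, this.1.le, this.2⟩

lemma v_one_eq {u₀ v₀ : ℝ → ℝ} (h : StandardPair u₀ v₀) : v₀ 1 = 1 := by
  have h1 : (1:ℝ) ≤ v₀ 1 := by
    refine le_of_tendsto h.v_one ?_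
    filter_upwards [Ioo_mem_nhdsLT_of_mem (by norm_num : (1:ℝ) ∈ Ioc 0 1)] with a ha
    exact h.v_mono ⟨ha.1.le, ha.2.le⟩ (by norm_num) ha.2.le
  exact le_antisymm (h.v_mem 1 (by norm_num)).2 h1



lemma vF_mono {u₀ v₀ F : ℝ → ℝ} (hp : StandardPair u₀ v₀) (hF : IsCDF F) :
    Monotone (fun x => v₀ (F x)) := fun x y hxy =>
  hp.v_mono ⟨cdf_nonneg hF x, cdf_le_one hF x⟩ ⟨cdf_nonneg hF y, cdf_le_one hF y⟩
    (hF.mono hxy)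

lemma v_nonneg {u₀ v₀ : ℝ → ℝ} (hp : StandardPair u₀ v₀) {α : ℝ}
    (h0 : 0 ≤ α) (h1 : α ≤ 1) : 0 ≤ v₀ α := (hp.v_mem α ⟨h0, h1⟩).1

lemma tendsto_vF_atBot {u₀ v₀ F : ℝ → ℝ} (hp : StandardPair u₀ v₀) (hF : IsCDF F) :
    Tendsto (fun x => v₀ (F x)) atBot (𝓝 0) := by
  have h1 : Tendsto F atBot (𝓝[≥] 0) := by
    refine tendsto_nhdsWithin_of_tendsto_nhds_of_eventually_within _ hF.tendsto_atBot ?_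
    exact Eventually.of_forall fun x => cdf_nonneg hF x
  have h2 : Tendsto v₀ (𝓝[≥] (0:ℝ)) (𝓝 0) := by
    have : 𝓝[≥] (0:ℝ) = 𝓝[>] (0:ℝ) ⊔ pure 0 := by
      rw [← Ioi_union_left, nhdsWithin_union, nhdsWithin_singleton]
    rw [this, tendsto_sup]
    constructor
    · simpa [hp.v_zero] using hp.v_right_cont 0 (by norm_num)
    · simpa [hp.v_zero] using (tendsto_pure_nhds v₀ 0)
  exact h2.comp h1


lemma nu_Iic {u₀ v₀ F : ℝ → ℝ} (hp : StandardPair u₀ v₀) (hF : IsCDF F)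
    {ν : Measure ℝ} (hν : IsLSR (fun x => v₀ (F x)) ν) (x : ℝ) :
    ν (Iic x) = ENNReal.ofReal (v₀ (F x)) := by
  have hu : Iic x = ⋃ n : ℕ, Ioc (x - (n+1)) x := by
    refine Subset.antisymm (fun y hy => ?_) (iUnion_subset fun n => Ioc_subset_Iic_self)
    rcases exists_nat_gt (x - y) with ⟨n, hn⟩
    exact mem_iUnion.2 ⟨n, by constructor <;> [linarith; exact hy]⟩
  have hdir : Directed (· ⊆ ·) (fun n : ℕ => Ioc (x - (n+1)) x) := by
    intro m n
    refine ⟨max m n, Ioc_subset_Ioc_left (by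
      have : (m:ℝ) ≤ max m n := by exact_mod_cast le_max_left m n
      linarith), Ioc_subset_Ioc_left (by
      have : (n:ℝ) ≤ max m n := by exact_mod_cast le_max_right m n
      linarith)⟩
  rw [hu, hdir.measure_iUnion]
  have hval : ∀ n : ℕ, ν (Ioc (x - (n+1)) x)
      = ENNReal.ofReal (v₀ (F x) - v₀ (F (x - (n+1)))) := fun n =>
    hν _ _ (by linarith [Nat.cast_nonneg (α := ℝ) n])
  simp only [hval]
  have hb : Tendsto (fun n : ℕ => v₀ (F (x - (n+1)))) atTop (𝓝 0) := by
    refine (tendsto_vF_atBot hp hF).comp ?_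
    have h1 : Tendsto (fun n : ℕ => ((n:ℝ)+1)) atTop atTop :=
      tendsto_atTop_add_const_right _ 1 tendsto_natCast_atTop_atTop
    have h2 := tendsto_neg_atBot_iff.2 h1
    simpa [sub_eq_add_neg] using tendsto_atBot_add_const_left _ x h2
  have ha : Tendsto (fun n : ℕ => ENNReal.ofReal (v₀ (F x) - v₀ (F (x - (n+1)))))
      atTop (𝓝 (ENNReal.ofReal (v₀ (F x)))) := by
    have := (tendsto_const_nhds.sub hb : Tendsto (fun n : ℕ => v₀ (F x) - v₀ (F (x - (n+1)))) atTop (𝓝 (v₀ (F x) - 0)))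
    rw [sub_zero] at this
    exact (ENNReal.continuous_ofReal.tendsto _).comp this
  have hmono : Monotone (fun n : ℕ => ENNReal.ofReal (v₀ (F x) - v₀ (F (x - (n+1))))) := by
    intro m n hmn
    refine ENNReal.ofReal_le_ofReal (sub_le_sub_left ?_ _)
    refine vF_mono hp hF (by push_cast; linarith [(Nat.cast_le (α := ℝ)).2 hmn])
  exact tendsto_nhds_unique (tendsto_atTop_iSup hmono) ha


lemma nu_univ_le_one {u₀ v₀ F : ℝ → ℝ} (hp : StandardPair u₀ v₀) (hF : IsCDF F)
    {ν : Measure ℝ} (hν : IsLSR (fun x => v₀ (F x)) ν) : ν univ ≤ 1 := by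
  have hu : (univ : Set ℝ) = ⋃ n : ℕ, Ioc (-(n:ℝ)) n := by
    refine Subset.antisymm (fun y _ => ?_) (subset_univ _)
    rcases exists_nat_gt |y| with ⟨n, hn⟩
    have := abs_lt.1 hn
    exact mem_iUnion.2 ⟨n, this.1, this.2.le⟩
  have hdir : Directed (· ⊆ ·) (fun n : ℕ => Ioc (-(n:ℝ)) n) := by
    intro m n
    refine ⟨max m n, Ioc_subset_Ioc ?_ ?_, Ioc_subset_Ioc ?_ ?_⟩ <;>
      simp [neg_le_neg_iff, Nat.cast_le, le_max_left, le_max_right]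
  rw [hu, hdir.measure_iUnion]
  refine iSup_le fun n => ?_
  rw [hν _ _ (by linarith [Nat.cast_nonneg (α := ℝ) n])]
  have h1 := (hp.v_mem (F n) ⟨cdf_nonneg hF _, cdf_le_one hF _⟩)
  have h2 := (hp.v_mem (F (-(n:ℝ))) ⟨cdf_nonneg hF _, cdf_le_one hF _⟩)
  calc ENNReal.ofReal ((fun x => v₀ (F x)) (n:ℝ) - (fun x => v₀ (F x)) (-(n:ℝ)))
      ≤ ENNReal.ofReal 1 := ENNReal.ofReal_le_ofReal (by simp only []; linarith [h1.2, h2.1])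
    _ = 1 := ENNReal.ofReal_one

lemma eta_singleton_one {u₀ v₀ : ℝ → ℝ} (hp : StandardPair u₀ v₀)
    {η : Measure ℝ} (hη : IsLSR01 v₀ η) : η {1} = 0 := by
  have key : ∀ a ∈ Ico (0:ℝ) 1, η {1} ≤ ENNReal.ofReal (1 - v₀ a) := by
    intro a ha
    calc η {1} ≤ η (Ioc a 1) := measure_mono (by intro y hy; simp at hy; simp [hy, ha.2])
    _ = ENNReal.ofReal (v₀ 1 - v₀ a) := hη a 1 ha.1 ha.2.le le_rfl
    _ = ENNReal.ofReal (1 - v₀ a) := by rw [v_one_eq hp]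
  have htend : Tendsto (fun a => ENNReal.ofReal (1 - v₀ a)) (𝓝[<] (1:ℝ)) (𝓝 0) := by
    have h1 : Tendsto (fun a => 1 - v₀ a) (𝓝[<] (1:ℝ)) (𝓝 0) := by
      have hsub : Tendsto (fun y : ℝ => 1 - y) (𝓝 (1:ℝ)) (𝓝 0) := by
        have hc : Continuous (fun y : ℝ => 1 - y) := by continuity
        simpa using hc.tendsto 1
      exact hsub.comp hp.v_one
    have h2 := (ENNReal.continuous_ofReal.tendsto 0).comp h1
    simp only [ENNReal.ofReal_zero] at h2
    exact h2
  refine le_antisymm ?_ zero_le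
  refine ge_of_tendsto htend ?_
  filter_upwards [Ioo_mem_nhdsLT_of_mem (by norm_num : (1:ℝ) ∈ Ioc 0 1)] with a ha
  exact key a ⟨ha.1.le, ha.2⟩


lemma lemmaA {u₀ v₀ F : ℝ → ℝ} (hp : StandardPair u₀ v₀) (hF : IsCDF F)
    {μ₀ η ν : Measure ℝ} (hμ₀ : IsLSL u₀ μ₀) (hη : IsLSR01 v₀ η)
    (hν : IsLSR (fun x => v₀ (F x)) ν) (ha : CondA u₀ ν)
    {c p : ℝ} (hp0 : 0 < p) (hp1 : p ≤ 1)
    (hlow : ∀ x, x < c → F x ≤ p) (hhigh : p ≤ F c) :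
    (∫⁻ x in Iio c, ENNReal.ofReal (v₀ (F x)) ∂μ₀) ≠ ⊤ ∧
    ∫ α in Ioc 0 p, u₀ (qf F α) ∂η
      = u₀ c * v₀ p - (∫⁻ x in Iio c, ENNReal.ofReal (v₀ (F x)) ∂μ₀).toReal := by
  haveI : SigmaFinite μ₀ := sigmaFinite_of_isLSL hμ₀
  haveI : IsFiniteMeasure ν :=
    ⟨lt_of_le_of_lt (nu_univ_le_one hp hF hν) ENNReal.one_lt_top⟩
  have hFm : Measurable F := hF.mono.measurable
  have hum : Measurable u₀ := hp.u_mono.measurable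
  set I := ∫⁻ x in Iio c, ENNReal.ofReal (v₀ (F x)) ∂μ₀ with hI
  -- Step 1: finiteness of I
  have hIfin : I ≠ ⊤ := by
    have hs₂ : MeasurableSet {z : ℝ × ℝ | z.1 < c ∧ z.2 ≤ z.1} :=
      ((measurableSet_lt measurable_fst measurable_const).inter
        (measurableSet_le measurable_snd measurable_fst))
    have h1 : (μ₀.prod ν) {z : ℝ × ℝ | z.1 < c ∧ z.2 ≤ z.1} = I := by
      rw [Measure.prod_apply hs₂, hI, ← lintegral_indicator measurableSet_Iio]
      refine lintegral_congr fun x => ?_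
      by_cases hx : x < c
      · have : Prod.mk x ⁻¹' {z : ℝ × ℝ | z.1 < c ∧ z.2 ≤ z.1} = Iic x := by
          ext y; simp [hx]
        rw [this, nu_Iic hp hF hν, indicator_of_mem (by exact hx)]
      · have : Prod.mk x ⁻¹' {z : ℝ × ℝ | z.1 < c ∧ z.2 ≤ z.1} = ∅ := by
          ext y; simp [hx]
        rw [this, measure_empty, indicator_of_notMem (by exact hx)]
    have h2 : (μ₀.prod ν) {z : ℝ × ℝ | z.1 < c ∧ z.2 ≤ z.1}
        = ∫⁻ y, μ₀ (Ico y c) ∂ν := by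
      rw [Measure.prod_apply_symm hs₂]
      refine lintegral_congr fun y => ?_
      congr 1
      ext x; simp [Ico, and_comm]
    have h3 : ∫⁻ y, μ₀ (Ico y c) ∂ν
        ≤ ∫⁻ y, (ENNReal.ofReal |u₀ c| + ENNReal.ofReal |u₀ y|) ∂ν := by
      refine lintegral_mono fun y => ?_
      rcases le_or_gt y c with hyc | hyc
      · rw [hμ₀ y c hyc]
        refine le_trans (ENNReal.ofReal_le_ofReal ?_) (ENNReal.ofReal_add_le)
        have := le_abs_self (u₀ c); have := neg_abs_le (u₀ y); linarith
      · rw [Ico_eq_empty (not_lt.2 hyc.le), measure_empty]; exact zero_le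
    have h4 : ∫⁻ y, (ENNReal.ofReal |u₀ c| + ENNReal.ofReal |u₀ y|) ∂ν < ⊤ := by
      rw [lintegral_add_left measurable_const, lintegral_const]
      refine ENNReal.add_lt_top.2 ⟨?_, ha⟩
      exact ENNReal.mul_lt_top ENNReal.ofReal_lt_top (measure_lt_top ν univ)
    rw [← h1]
    exact ne_of_lt (lt_of_le_of_lt (le_of_eq h2) (lt_of_le_of_lt h3 h4))
  refine ⟨hIfin, ?_⟩
  -- the restricted measure on (0, p]
  set η' := η.restrict (Ioc 0 p) with hη'
  haveI : IsFiniteMeasure η' := by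
    constructor
    rw [hη', Measure.restrict_apply_univ, hη 0 p le_rfl hp0.le hp1]
    exact ENNReal.ofReal_lt_top
  have hη'univ : η' univ = ENNReal.ofReal (v₀ p) := by
    rw [hη', Measure.restrict_apply_univ, hη 0 p le_rfl hp0.le hp1, hp.v_zero, sub_zero]
  -- a.e. facts
  have hae : ∀ᵐ α ∂η', α ∈ Ioc 0 p ∧ α ≠ 1 := by
    have h1 : ∀ᵐ α ∂η', α ∈ Ioc 0 p := ae_restrict_mem measurableSet_Ioc
    have h2 : ∀ᵐ α ∂η', α ≠ 1 := by
      rw [ae_iff]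
      have hsub2 : {α : ℝ | ¬ α ≠ 1} ⊆ ({1} : Set ℝ) := fun α hα => by
        simpa using not_not.1 hα
      refine le_antisymm ?_ zero_le
      calc η' {α : ℝ | ¬ α ≠ 1} ≤ η' {1} := measure_mono hsub2
        _ ≤ η {1} := Measure.restrict_apply_le _ _
        _ = 0 := eta_singleton_one hp hη
    exact h1.and h2
  -- the Fubini set
  have hsm : MeasurableSet {z : ℝ × ℝ | z.1 < c ∧ z.2 ≤ F z.1} :=
    ((measurableSet_lt measurable_fst measurable_const).inter
      (measurableSet_le measurable_snd (hFm.comp measurable_fst)))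
  -- first order: equals I
  have hprod1 : (μ₀.prod η') {z : ℝ × ℝ | z.1 < c ∧ z.2 ≤ F z.1} = I := by
    rw [Measure.prod_apply hsm, hI, ← lintegral_indicator measurableSet_Iio]
    refine lintegral_congr fun x => ?_
    by_cases hx : x < c
    · have hsec : Prod.mk x ⁻¹' {z : ℝ × ℝ | z.1 < c ∧ z.2 ≤ F z.1} = Iic (F x) := by
        ext y; simp [hx]
      have hFx0 := cdf_nonneg hF x
      have hFxp := hlow x hx
      have hcap : Iic (F x) ∩ Ioc 0 p = Ioc 0 (F x) := by
        ext y
        simp only [mem_inter_iff, mem_Iic, mem_Ioc]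
        exact ⟨fun h => ⟨h.2.1, h.1⟩, fun h => ⟨h.2, h.1, le_trans h.2 hFxp⟩⟩
      rw [hsec, hη', Measure.restrict_apply measurableSet_Iic, hcap,
        hη 0 (F x) le_rfl hFx0 (le_trans hFxp hp1), hp.v_zero, sub_zero,
        indicator_of_mem (by exact hx)]
    · have hsec : Prod.mk x ⁻¹' {z : ℝ × ℝ | z.1 < c ∧ z.2 ≤ F z.1} = ∅ := by
        ext y; simp [hx]
      rw [hsec, measure_empty, indicator_of_notMem (by exact hx)]
  -- second order: sections are Ico (qf F α) c
  set g : ℝ → ENNReal := fun α => μ₀ ((fun x => (x, α)) ⁻¹' {z : ℝ × ℝ | z.1 < c ∧ z.2 ≤ F z.1})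
    with hg
  have hgm : Measurable g := measurable_measure_prodMk_right hsm
  have hprod2 : (μ₀.prod η') {z : ℝ × ℝ | z.1 < c ∧ z.2 ≤ F z.1} = ∫⁻ α, g α ∂η' :=
    Measure.prod_apply_symm hsm
  have hgood : ∀ α, α ∈ Ioc 0 p → α ≠ 1 →
      g α = ENNReal.ofReal (u₀ c - u₀ (qf F α)) ∧ qf F α ≤ c := by
    intro α hα hα1
    have hα0 : 0 < α := hα.1
    have hαlt1 : α < 1 := lt_of_le_of_ne (le_trans hα.2 hp1) hα1
    have hqc : qf F α ≤ c := cdf_qf_le hF hα0 (le_trans hα.2 hhigh)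
    have hsec : ((fun x => (x, α)) ⁻¹' {z : ℝ × ℝ | z.1 < c ∧ z.2 ≤ F z.1})
        = Ico (qf F α) c := by
      ext x
      simp only [mem_preimage, mem_setOf_eq, mem_Ico]
      rw [← cdf_qf_le_iff hF hα0 hαlt1, and_comm]
    refine ⟨?_, hqc⟩
    rw [hg]; simp only []; rw [hsec, hμ₀ _ _ hqc]
  have hgae : g =ᵐ[η'] fun α => ENNReal.ofReal (u₀ c - u₀ (qf F α)) := by
    filter_upwards [hae] with α hα using (hgood α hα.1 hα.2).1
  -- key identity
  have hkey : ∫⁻ α, ENNReal.ofReal (u₀ c - u₀ (qf F α)) ∂η' = I := by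
    rw [← lintegral_congr_ae hgae, ← hprod2, hprod1]
  -- a.e. measurability of u₀ ∘ qf F
  have haesm : AEStronglyMeasurable (fun α => u₀ (qf F α)) η' := by
    have heq : (fun α => u₀ (qf F α)) =ᵐ[η'] fun α => u₀ c - (g α).toReal := by
      filter_upwards [hae] with α hα
      obtain ⟨hgα, hqc⟩ := hgood α hα.1 hα.2
      rw [hgα, ENNReal.toReal_ofReal (by linarith [hp.u_mono hqc])]
      ring
    exact (aestronglyMeasurable_iff_aemeasurable).2
      (((measurable_const.sub (hgm.ennreal_toReal)).aemeasurable).congr heq.symm)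
  -- integrability
  have hIlt : ∫⁻ α, ENNReal.ofReal (u₀ c - u₀ (qf F α)) ∂η' < ⊤ :=
    lt_of_le_of_lt (le_of_eq hkey) (lt_top_iff_ne_top.2 hIfin)
  have hint : Integrable (fun α => u₀ (qf F α)) η' := by
    refine ⟨haesm, ?_⟩
    rw [hasFiniteIntegral_iff_norm]
    have hb : ∀ᵐ α ∂η', ENNReal.ofReal ‖u₀ (qf F α)‖
        ≤ ENNReal.ofReal |u₀ c| + ENNReal.ofReal (u₀ c - u₀ (qf F α)) := by
      filter_upwards [hae] with α hα
      obtain ⟨_, hqc⟩ := hgood α hα.1 hα.2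
      have huc := hp.u_mono hqc
      refine le_trans (ENNReal.ofReal_le_ofReal ?_) ENNReal.ofReal_add_le
      rw [Real.norm_eq_abs]
      rcases abs_cases (u₀ (qf F α)) with ⟨h, _⟩ | ⟨h, _⟩ <;>
        [skip; skip] <;> rw [h] <;> [linarith [le_abs_self (u₀ c)];
          linarith [neg_abs_le (u₀ c)]]
    calc ∫⁻ α, ENNReal.ofReal ‖u₀ (qf F α)‖ ∂η'
        ≤ ∫⁻ α, (ENNReal.ofReal |u₀ c| + ENNReal.ofReal (u₀ c - u₀ (qf F α))) ∂η' :=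
          lintegral_mono_ae hb
      _ < ⊤ := by
          rw [lintegral_add_left measurable_const, lintegral_const]
          exact ENNReal.add_lt_top.2
            ⟨ENNReal.mul_lt_top ENNReal.ofReal_lt_top (measure_lt_top η' univ), hIlt⟩
  -- compute the integral
  have hconst : Integrable (fun _ : ℝ => u₀ c) η' := integrable_const _
  have hnn : 0 ≤ᵐ[η'] fun α => u₀ c - u₀ (qf F α) := by
    filter_upwards [hae] with α hα
    obtain ⟨_, hqc⟩ := hgood α hα.1 hα.2
    simp [hp.u_mono hqc]
  have heq1 : ∫ α, (u₀ c - u₀ (qf F α)) ∂η' = I.toReal := by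
    rw [integral_eq_lintegral_of_nonneg_ae hnn (hconst.sub hint).aestronglyMeasurable, hkey]
  have heq2 : ∫ α, (u₀ c - u₀ (qf F α)) ∂η' = u₀ c * v₀ p - ∫ α, u₀ (qf F α) ∂η' := by
    rw [integral_sub hconst hint, integral_const, measureReal_def, hη'univ,
      ENNReal.toReal_ofReal (v_nonneg hp hp0.le hp1), smul_eq_mul, mul_comm]
  have := heq1.symm.trans heq2
  linarith [this]


lemma qf_rightLim_le {F : ℝ → ℝ} (hF : IsCDF F) {α₀ β : ℝ} (h0 : 0 < α₀)
    (hb : α₀ < β) (hb1 : β < 1) :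
    Function.rightLim (fun α => qf F α) α₀ ≤ qf F β := by
  set m := (α₀ + β) / 2 with hm
  have hm1 : α₀ < m := by rw [hm]; linarith
  have hm2 : m < β := by rw [hm]; linarith
  have hm3 : m < 1 := lt_trans hm2 hb1
  set Q : ℝ → ℝ := fun α => qf F (min (max α α₀) m) with hQ
  have hQmono : Monotone Q := by
    intro a b hab
    refine cdf_qf_mono hF ?_ ?_ ?_
    · exact lt_of_lt_of_le h0 (le_min (le_max_right _ _) hm1.le)
    · exact lt_of_le_of_lt (min_le_right _ _) hm3
    · exact min_le_min (max_le_max hab le_rfl) le_rfl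
  have hQtend : Tendsto Q (𝓝[>] α₀) (𝓝 (sInf (Q '' Ioi α₀))) :=
    hQmono.tendsto_nhdsGT α₀
  have heq : (fun α => qf F α) =ᶠ[𝓝[>] α₀] Q := by
    filter_upwards [Ioo_mem_nhdsGT_of_mem (by constructor <;> [exact le_rfl; exact hm1] :
      α₀ ∈ Ico α₀ m)] with α hα
    rw [hQ]
    simp only []
    rw [max_eq_left hα.1.le, min_eq_left hα.2.le]
  have htend : Tendsto (fun α => qf F α) (𝓝[>] α₀) (𝓝 (sInf (Q '' Ioi α₀))) :=
    hQtend.congr' heq.symm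
  rw [rightLim_eq_of_tendsto htend]
  have hbdd : BddBelow (Q '' Ioi α₀) := by
    refine ⟨Q α₀, fun y hy => ?_⟩
    rcases hy with ⟨γ, hγ, rfl⟩
    exact hQmono (le_of_lt hγ)
  have hmem : Q m ∈ Q '' Ioi α₀ := ⟨m, hm1, rfl⟩
  refine le_trans (csInf_le hbdd hmem) ?_
  have : Q m = qf F m := by
    rw [hQ]; simp only []
    rw [max_eq_left hm1.le, min_self]
  rw [this]
  exact cdf_qf_mono hF (lt_trans h0 hm1) hb1 hm2.le

lemma cdf_le_of_lt_rightLim {F : ℝ → ℝ} (hF : IsCDF F) {α₀ x : ℝ} (h0 : 0 < α₀)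
    (h1 : α₀ < 1) (hx : x < Function.rightLim (fun α => qf F α) α₀) : F x ≤ α₀ := by
  by_contra hc
  push_neg at hc
  set β := (α₀ + F x) / 2 with hβ
  have hβ1 : α₀ < β := by rw [hβ]; linarith
  have hβ2 : β < F x := by rw [hβ]; linarith
  have hβ3 : β < 1 := by
    have := cdf_le_one hF x
    rw [hβ]; linarith
  have h4 : x < qf F β := lt_of_lt_of_le hx (qf_rightLim_le hF h0 hβ1 hβ3)
  exact absurd ((cdf_lt_qf_iff hF (lt_trans h0 hβ1) hβ3).1 h4) (not_lt.2 hβ2.le)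

/-- **Lemma 3, crossing points.**  Let `(u₀,v₀)` be a standard pair and
`F₁, F₂` cdf's satisfying condition (a).  If `x₀` is an up-crossing point of
`(F₁,F₂)` — i.e. `F₁(x₀⁻) ≤ F₂(x₀⁻) ≤ F₂(x₀) ≤ F₁(x₀)` with `F₁ < F₂` slightly below
and `F₁ > F₂` slightly above — then
`∫_{-∞}^{x₀} v₀(F₁) du₀ ≥ ∫_{-∞}^{x₀} v₀(F₂) du₀` implies
`∫_0^p u₀(F₁⁻¹) dv₀ ≤ ∫_0^p u₀(F₂⁻¹) dv₀` for all `p ∈ [F₂(x₀⁻), F₂(x₀)]`.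
Conversely, if `α₀` is an up-crossing value of `(F₁⁻¹, F₂⁻¹)`, then
`∫_0^{α₀} u₀(F₁⁻¹) dv₀ ≤ ∫_0^{α₀} u₀(F₂⁻¹) dv₀` implies
`∫_{-∞}^{c} v₀(F₁) du₀ ≥ ∫_{-∞}^{c} v₀(F₂) du₀` for all `c ∈ [F₂⁻¹(α₀), F₂⁻¹(α₀⁺)]`. -/
theorem lemma3_crossing
    (u₀ v₀ F₁ F₂ : ℝ → ℝ) (hpair : StandardPair u₀ v₀)
    (hF₁ : IsCDF F₁) (hF₂ : IsCDF F₂)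
    (μ₀ : Measure ℝ) (hμ₀ : IsLSL u₀ μ₀)
    (η : Measure ℝ) (hη : IsLSR01 v₀ η)
    (ν₁ ν₂ : Measure ℝ)
    (hν₁ : IsLSR (fun x => v₀ (F₁ x)) ν₁) (hν₂ : IsLSR (fun x => v₀ (F₂ x)) ν₂)
    (ha₁ : CondA u₀ ν₁) (ha₂ : CondA u₀ ν₂) :
    -- up-crossing point of (F₁, F₂)
    (∀ x₀ : ℝ,
      Function.leftLim F₁ x₀ ≤ Function.leftLim F₂ x₀ → F₂ x₀ ≤ F₁ x₀ →
      (∃ ε > 0, ∀ δ : ℝ, 0 < δ → δ < ε →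
        F₁ (x₀ - δ) < F₂ (x₀ - δ) ∧ F₂ (x₀ + δ) < F₁ (x₀ + δ)) →
      (∫⁻ x in Iio x₀, ENNReal.ofReal (v₀ (F₂ x)) ∂μ₀ ≤
          ∫⁻ x in Iio x₀, ENNReal.ofReal (v₀ (F₁ x)) ∂μ₀) →
      ∀ p : ℝ, Function.leftLim F₂ x₀ ≤ p → p ≤ F₂ x₀ →
        ∫ α in Ioc 0 p, u₀ (qf F₁ α) ∂η ≤ ∫ α in Ioc 0 p, u₀ (qf F₂ α) ∂η) ∧
    -- up-crossing value of (F₁⁻¹, F₂⁻¹)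
    (∀ α₀ : ℝ, 0 < α₀ → α₀ < 1 →
      qf F₁ α₀ ≤ qf F₂ α₀ →
      Function.rightLim (fun α => qf F₂ α) α₀ ≤ Function.rightLim (fun α => qf F₁ α) α₀ →
      (∃ ε > 0, ∀ δ : ℝ, 0 < δ → δ < ε →
        qf F₁ (α₀ - δ) < qf F₂ (α₀ - δ) ∧ qf F₂ (α₀ + δ) < qf F₁ (α₀ + δ)) →
      (∫ α in Ioc 0 α₀, u₀ (qf F₁ α) ∂η ≤ ∫ α in Ioc 0 α₀, u₀ (qf F₂ α) ∂η) →
      ∀ c : ℝ, qf F₂ α₀ ≤ c → c ≤ Function.rightLim (fun α => qf F₂ α) α₀ →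
        ∫⁻ x in Iio c, ENNReal.ofReal (v₀ (F₂ x)) ∂μ₀ ≤
          ∫⁻ x in Iio c, ENNReal.ofReal (v₀ (F₁ x)) ∂μ₀) := by
  constructor
  · -- up-crossing point
    intro x₀ hll hvv _hcross hyp p hpl hpu
    rcases le_or_gt p 0 with hp0 | hp0
    · rw [Ioc_eq_empty (not_lt.2 hp0)]
      simp
    have hp1 : p ≤ 1 := le_trans hpu (cdf_le_one hF₂ x₀)
    have hlow₂ : ∀ x, x < x₀ → F₂ x ≤ p :=
      fun x hx => le_trans (hF₂.mono.le_leftLim hx) hpl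
    have hlow₁ : ∀ x, x < x₀ → F₁ x ≤ p :=
      fun x hx => le_trans (hF₁.mono.le_leftLim hx) (le_trans hll hpl)
    have hhigh₂ : p ≤ F₂ x₀ := hpu
    have hhigh₁ : p ≤ F₁ x₀ := le_trans hpu hvv
    obtain ⟨hI₁fin, hJ₁⟩ := lemmaA hpair hF₁ hμ₀ hη hν₁ ha₁ hp0 hp1 hlow₁ hhigh₁
    obtain ⟨hI₂fin, hJ₂⟩ := lemmaA hpair hF₂ hμ₀ hη hν₂ ha₂ hp0 hp1 hlow₂ hhigh₂
    have htr : (∫⁻ x in Iio x₀, ENNReal.ofReal (v₀ (F₂ x)) ∂μ₀).toReal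
        ≤ (∫⁻ x in Iio x₀, ENNReal.ofReal (v₀ (F₁ x)) ∂μ₀).toReal :=
      (ENNReal.toReal_le_toReal hI₂fin hI₁fin).2 hyp
    rw [hJ₁, hJ₂]
    linarith
  · -- up-crossing value
    intro α₀ h0 h1 hq hr _hcross hyp c hc1 hc2
    have hhigh₂ : α₀ ≤ F₂ c := (cdf_qf_le_iff hF₂ h0 h1).1 hc1
    have hhigh₁ : α₀ ≤ F₁ c := (cdf_qf_le_iff hF₁ h0 h1).1 (le_trans hq hc1)
    have hlow₂ : ∀ x, x < c → F₂ x ≤ α₀ := fun x hx =>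
      cdf_le_of_lt_rightLim hF₂ h0 h1 (lt_of_lt_of_le hx hc2)
    have hlow₁ : ∀ x, x < c → F₁ x ≤ α₀ := fun x hx =>
      cdf_le_of_lt_rightLim hF₁ h0 h1 (lt_of_lt_of_le hx (le_trans hc2 hr))
    obtain ⟨hI₁fin, hJ₁⟩ := lemmaA hpair hF₁ hμ₀ hη hν₁ ha₁ h0 h1.le hlow₁ hhigh₁
    obtain ⟨hI₂fin, hJ₂⟩ := lemmaA hpair hF₂ hμ₀ hη hν₂ ha₂ h0 h1.le hlow₂ hhigh₂
    rw [hJ₁, hJ₂] at hyp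
    refine (ENNReal.toReal_le_toReal hI₂fin hI₁fin).1 ?_
    linarith


end
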